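/- arXiv:2006.04399 — 6 statements merged into one kernel-verified Lean document; each statement's English description precedes it below -/
import Mathlib

section
/- Markov's Principle (for every f : ℕ → Bool, ¬¬(∃ n, f n = true) → ∃ n, f n = true) holds if and only if every enumerable predicate on a discrete type is stable under double negation. -/
/-- Markov's Principle holds iff every enumerable predicate on a discrete type
is stable under double negation. -/
theorem stmt0 :
    (∀ f : ℕ → Bool, ¬¬(∃ n, f n = true) → ∃ n, f n = true) ↔
      (∀ (X : Type) (p : X → Prop),
        (∃ d : X → X → Bool, ∀ x y : X, x = y ↔ d x y = true) →
        (∃ f : ℕ → Option X, ∀ x, p x ↔ ∃ n, f n = some x) →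
        ∀ x, ¬¬ p x → p x) := by
  constructor
  · rintro mp X p ⟨d, hd⟩ ⟨f, hf⟩ x hnn
    have : ∃ n, (fun n => (fun o => match o with
        | some y => d y x
        | none => false) (f n)) n = true := by
      apply mp
      intro h
      apply hnn
      intro hp
      obtain ⟨n, hn⟩ := (hf x).1 hp
      exact h ⟨n, by simp [hn, ← hd]⟩
    obtain ⟨n, hn⟩ := this
    rcases hfn : f n with _ | y
    · simp [hfn] at hn
    · simp [hfn] at hn
      have : y = x := (hd y x).2 hn
      exact (hf x).2 ⟨n, by rw [hfn, this]⟩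
  · intro H f hnn
    have := H Unit (fun _ => ∃ n, f n = true)
      ⟨fun _ _ => true, by intro x y; simp⟩
      ⟨fun n => if f n then some () else none, by
        intro x; constructor
        · rintro ⟨n, hn⟩; exact ⟨n, by simp [hn]⟩
        · rintro ⟨n, hn⟩
          by_cases h : f n = true
          · exact ⟨n, h⟩
          · simp [h] at hn⟩ () hnn
    exact this
end

section
/- Every Heyting algebra embeds into a complete Heyting algebra via a map f preserving order (x ≤ y ↔ f x ≤ f y) and preserving bottom, implication, meet, and join up to equivalence (MacNeille completion). -/
/-- A Heyting algebra on a preorder, satisfying the adjunction laws. -/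
structure HeytingPre where
  H : Type
  le : H → H → Prop
  le_refl : ∀ x, le x x
  le_trans : ∀ x y z, le x y → le y z → le x z
  bot : H
  meet : H → H → H
  join : H → H → H
  himp : H → H → H
  bot_le : ∀ x, le bot x
  himp_adj : ∀ x y z, le (meet z x) y ↔ le z (himp x y)
  meet_adj : ∀ x y z, (le z x ∧ le z y) ↔ le z (meet x y)
  join_adj : ∀ x y z, (le x z ∧ le y z) ↔ le (join x y) z

/-- A complete Heyting algebra: arbitrary meets of subsets. -/
structure CompleteHeytingPre extends HeytingPre where
  inf : (H → Prop) → H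
  inf_adj : ∀ (P : H → Prop) (x : H), (∀ y, P y → le x y) ↔ le x (inf P)

/-- Equivalence: mutual ≤. -/
def HeytingPre.equiv (A : HeytingPre) (x y : A.H) : Prop := A.le x y ∧ A.le y x

namespace MacN

variable (A : HeytingPre)

/-- Upper bounds of a set. -/
def U (X : A.H → Prop) (u : A.H) : Prop := ∀ x, X x → A.le x u
/-- Lower bounds of a set. -/
def L (S : A.H → Prop) (z : A.H) : Prop := ∀ u, S u → A.le z u
/-- Down-complete sets. -/
def DC (X : A.H → Prop) : Prop := ∀ z, L A (U A X) z → X z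

variable {A}

theorem dc_dcl (X : A.H → Prop) (hX : DC A X) {x y : A.H} (hx : X x)
    (hyx : A.le y x) : X y := by
  apply hX
  intro u hu
  exact A.le_trans y x u hyx (hu x hx)

theorem meet_le_left (x y : A.H) : A.le (A.meet x y) x :=
  ((A.meet_adj x y _).mpr (A.le_refl _)).1

theorem meet_le_right (x y : A.H) : A.le (A.meet x y) y :=
  ((A.meet_adj x y _).mpr (A.le_refl _)).2

theorem le_join_left (x y : A.H) : A.le x (A.join x y) :=
  ((A.join_adj x y _).mpr (A.le_refl _)).1

theorem le_join_right (x y : A.H) : A.le y (A.join x y) :=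
  ((A.join_adj x y _).mpr (A.le_refl _)).2

theorem subset_LU (X : A.H → Prop) {x : A.H} (hx : X x) : L A (U A X) x :=
  fun u hu => hu x hx

/-- `L (U ·)` is idempotent, so `L (U X)` is down-complete. -/
theorem dc_LU (X : A.H → Prop) : DC A (L A (U A X)) := by
  intro z hz u hu
  exact hz u (fun w hw => hw u hu)

theorem dc_down (x : A.H) : DC A (fun z => A.le z x) := by
  intro z hz
  exact hz x (fun w hw => hw)

variable (A)

/-- The MacNeille completion. -/
def C : CompleteHeytingPre where
  H := {X : A.H → Prop // DC A X}
  le X Y := ∀ z, X.1 z → Y.1 z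
  le_refl X z h := h
  le_trans X Y Z h1 h2 z hz := h2 z (h1 z hz)
  bot := ⟨fun z => A.le z A.bot, dc_down A.bot⟩
  meet X Y := ⟨fun z => X.1 z ∧ Y.1 z, by
    intro z hz
    constructor
    · apply X.2; intro u hu; exact hz u (fun w hw => hu w hw.1)
    · apply Y.2; intro u hu; exact hz u (fun w hw => hu w hw.2)⟩
  join X Y := ⟨L A (U A (fun z => X.1 z ∨ Y.1 z)), dc_LU _⟩
  himp X Y := ⟨fun z => ∀ w, X.1 w → Y.1 (A.meet z w), by
    intro z hz w hw
    apply Y.2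
    intro u hu
    rw [A.himp_adj]
    apply hz
    intro v hv
    rw [← A.himp_adj]
    exact hu _ (hv w hw)⟩
  inf P := ⟨fun z => ∀ X, P X → X.1 z, by
    intro z hz X hX
    apply X.2
    intro u hu
    exact hz u (fun w hw => hu w (hw X hX))⟩
  bot_le X z hz := X.2 z (fun u hu => A.le_trans z A.bot u hz (A.bot_le u))
  himp_adj X Y Z := by
    constructor
    · intro h z hz w hw
      exact h _ ⟨dc_dcl _ Z.2 hz (meet_le_left z w), dc_dcl _ X.2 hw (meet_le_right z w)⟩
    · intro h z hz
      exact dc_dcl _ Y.2 (h z hz.1 z hz.2) ((A.meet_adj z z z).mp ⟨A.le_refl z, A.le_refl z⟩)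
  meet_adj X Y Z := by
    constructor
    · rintro ⟨h1, h2⟩ z hz; exact ⟨h1 z hz, h2 z hz⟩
    · intro h; exact ⟨fun z hz => (h z hz).1, fun z hz => (h z hz).2⟩
  join_adj X Y Z := by
    constructor
    · rintro ⟨h1, h2⟩ z hz
      apply Z.2
      intro u hu
      apply hz
      rintro w (hw | hw)
      · exact hu w (h1 w hw)
      · exact hu w (h2 w hw)
    · intro h
      constructor
      · intro z hz; exact h z (subset_LU _ (Or.inl hz))
      · intro z hz; exact h z (subset_LU _ (Or.inr hz))
  inf_adj P X := by
    constructor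
    · intro h z hz Y hY; exact h Y hY z hz
    · intro h Y hY z hz; exact h z hz Y hY

end MacN

/-- MacNeille completion: every Heyting algebra embeds into a complete Heyting
algebra via an order-reflecting map preserving 0, ⇒, ⊓, ⊔ up to equivalence. -/
theorem stmt3 (A : HeytingPre) :
    ∃ (C : CompleteHeytingPre) (f : A.H → C.H),
      (∀ x y : A.H, A.le x y ↔ C.le (f x) (f y)) ∧
      C.toHeytingPre.equiv (f A.bot) C.bot ∧
      (∀ x y : A.H, C.toHeytingPre.equiv (f (A.himp x y)) (C.himp (f x) (f y))) ∧
      (∀ x y : A.H, C.toHeytingPre.equiv (f (A.meet x y)) (C.meet (f x) (f y))) ∧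
      (∀ x y : A.H, C.toHeytingPre.equiv (f (A.join x y)) (C.join (f x) (f y))) := by
  refine ⟨MacN.C A, fun x => ⟨fun z => A.le z x, MacN.dc_down x⟩, ?_, ?_, ?_, ?_, ?_⟩
  · intro x y
    constructor
    · intro h z hz; exact A.le_trans z x y hz h
    · intro h; exact h x (A.le_refl x)
  · exact ⟨fun z hz => hz, fun z hz => hz⟩
  · intro x y
    constructor
    · intro z hz w hw
      -- z ≤ x⇒y, w ≤ x ⊢ z ⊓ w ≤ y
      have h1 : A.le (A.meet z x) y := (A.himp_adj x y z).mpr hz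
      have h2 : A.le (A.meet z w) (A.meet z x) :=
        (A.meet_adj z x _).mp ⟨MacN.meet_le_left z w,
          A.le_trans _ w x (MacN.meet_le_right z w) hw⟩
      exact A.le_trans _ _ _ h2 h1
    · intro z hz
      exact (A.himp_adj x y z).mp (hz x (A.le_refl x))
  · intro x y
    constructor
    · intro z hz
      exact ⟨A.le_trans z _ x hz (MacN.meet_le_left x y),
        A.le_trans z _ y hz (MacN.meet_le_right x y)⟩
    · intro z hz
      exact (A.meet_adj x y z).mp hz
  · intro x y
    constructor
    · intro z hz u hu
      have hx : A.le x u := hu x (Or.inl (A.le_refl x))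
      have hy : A.le y u := hu y (Or.inr (A.le_refl y))
      exact A.le_trans z _ u hz ((A.join_adj x y u).mp ⟨hx, hy⟩)
    · intro z hz
      apply hz
      rintro w (hw | hw)
      · exact A.le_trans w x _ hw (MacN.le_join_left x y)
      · exact A.le_trans w y _ hw (MacN.le_join_right x y)
end

section
/- The MacNeille completion of a Boolean (Heyting) algebra is Boolean: if H satisfies (x ⇒ y) ⇒ x ≤ x for all x, y, then so does its completion by down-complete sets. -/
/-- The set of lower bounds of `X`. -/
def HeytingPre.lb (A : HeytingPre) (X : A.H → Prop) : A.H → Prop :=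
  fun x => ∀ y, X y → A.le x y

/-- The set of upper bounds of `X`. -/
def HeytingPre.ub (A : HeytingPre) (X : A.H → Prop) : A.H → Prop :=
  fun x => ∀ y, X y → A.le y x

/-- Down-complete sets: `L (U X) ⊆ X`. These form the MacNeille completion,
ordered by inclusion. -/
def HeytingPre.DownComplete (A : HeytingPre) (X : A.H → Prop) : Prop :=
  ∀ x, A.lb (A.ub X) x → X x

/-- Implication in the MacNeille completion. -/
def HeytingPre.cimp (A : HeytingPre) (X Y : A.H → Prop) : A.H → Prop :=
  fun x => ∀ y, X y → Y (A.meet x y)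

/-- If `A` is Boolean (satisfies Peirce's law), then its MacNeille completion is
Boolean: Peirce's law `(X ⇒ Y) ⇒ X ⊆ X` holds for down-complete sets. -/
theorem stmt4 (A : HeytingPre)
    (hBool : ∀ x y : A.H, A.le (A.himp (A.himp x y) x) x)
    (X Y : A.H → Prop) (hX : A.DownComplete X) (hY : A.DownComplete Y) :
    ∀ x, A.cimp (A.cimp X Y) X x → X x := by
  intro x hx
  -- meet projections
  have proj1 : ∀ a b : A.H, A.le (A.meet a b) a := fun a b =>
    (((A.meet_adj a b (A.meet a b)).mpr (A.le_refl _))).1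
  have proj2 : ∀ a b : A.H, A.le (A.meet a b) b := fun a b =>
    (((A.meet_adj a b (A.meet a b)).mpr (A.le_refl _))).2
  apply hX
  intro u hu
  -- ¬u := u ⇒ ⊥ belongs to cimp X Y
  have hnu : A.cimp X Y (A.himp u A.bot) := by
    intro z hz
    apply hY
    intro w _
    -- meet ¬u z ≤ bot ≤ w
    have h1 : A.le (A.meet (A.himp u A.bot) z) (A.himp u A.bot) := proj1 _ _
    have h2 : A.le (A.meet (A.himp u A.bot) z) u :=
      A.le_trans _ _ _ (proj2 _ _) (hu z hz)
    have h3 : A.le (A.meet (A.himp u A.bot) z) (A.meet (A.himp u A.bot) u) :=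
      (A.meet_adj _ _ _).mp ⟨h1, h2⟩
    have h4 : A.le (A.meet (A.himp u A.bot) u) A.bot :=
      (A.himp_adj u A.bot (A.himp u A.bot)).mpr (A.le_refl _)
    exact A.le_trans _ _ _ (A.le_trans _ _ _ h3 h4) (A.bot_le w)
  have hmem : X (A.meet x (A.himp u A.bot)) := hx _ hnu
  have h5 : A.le (A.meet x (A.himp u A.bot)) u := hu _ hmem
  have h6 : A.le x (A.himp (A.himp u A.bot) u) := (A.himp_adj _ _ _).mp h5
  exact A.le_trans _ _ _ h6 (hBool u A.bot)
end

section
/- Assuming excluded middle and Weak Kőnig's Lemma, every predicate on the natural numbers is decidable: for every p : ℕ → Prop there is f : ℕ → Bool with ∀ n, p n ↔ f n = true. -/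
/-- A binary tree: a non-empty, prefix-closed predicate on Boolean lists. -/
def IsTree (τ : List Bool → Prop) : Prop :=
  τ [] ∧ ∀ u v : List Bool, u <+: v → τ v → τ u

/-- A tree is infinite if it contains elements of every length. -/
def TreeInfinite (τ : List Bool → Prop) : Prop :=
  ∀ k : ℕ, ∃ u : List Bool, τ u ∧ u.length ≥ k

/-- An infinite path through a tree. -/
def HasInfinitePath (τ : List Bool → Prop) : Prop :=
  ∃ f : ℕ → Bool, ∀ n : ℕ, τ ((List.range (n + 1)).map f)

/-- Weak Kőnig's Lemma. -/
def WKL : Prop := ∀ τ : List Bool → Prop, IsTree τ → TreeInfinite τ → HasInfinitePath τ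

/-- EM and WKL make every predicate on ℕ decidable. -/
theorem stmt8 (em : ∀ P : Prop, P ∨ ¬ P) (wkl : WKL) (p : ℕ → Prop) :
    ∃ f : ℕ → Bool, ∀ n, p n ↔ f n = true := by
  set τ : List Bool → Prop := fun u => ∀ i : ℕ, (h : i < u.length) → (p i ↔ u[i] = true)
    with hτ
  have htree : IsTree τ := by
    constructor
    · intro i h; simp at h
    · intro u v huv hv i h
      rw [huv.getElem h]
      exact hv i (h.trans_le huv.length_le)
  have hinf : TreeInfinite τ := by
    intro k
    induction k with
    | zero => exact ⟨[], fun i h => by simp at h, by simp⟩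
    | succ k ih =>
      obtain ⟨u, hu, hlen⟩ := ih
      rcases em (p u.length) with hp | hp
      · refine ⟨u ++ [true], ?_, by simpa using hlen⟩
        intro i h
        rcases lt_or_ge i u.length with h' | h'
        · rw [List.getElem_append_left h']; exact hu i h'
        · have : i = u.length := by
            have := h; simp at this; omega
          subst this
          simp [hp]
      · refine ⟨u ++ [false], ?_, by simpa using hlen⟩
        intro i h
        rcases lt_or_ge i u.length with h' | h'
        · rw [List.getElem_append_left h']; exact hu i h'
        · have : i = u.length := by
            have := h; simp at this; omega
          subst this
          simp [hp]
  obtain ⟨f, hf⟩ := wkl τ htree hinf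
  refine ⟨f, fun n => ?_⟩
  have h := hf n n (by simp)
  simpa using h
end

section
/- If the relation R : X → X → Prop is well-founded, then the transitive closure of the list-expansion relation ≺_R is well-founded on lists over X. Here A ≺_R B holds iff B = B' ++ x :: B'', every element c of C satisfies R c x, and A is a permutation of B' ++ C ++ B''. -/
/-- List expansion: replace one element `x` of the list by a finite collection `C`
of `R`-predecessors of `x`, up to permutation. -/
def ListExpand {X : Type} (R : X → X → Prop) (A B : List X) : Prop :=
  ∃ (B' B'' C : List X) (x : X),
    B = B' ++ x :: B'' ∧ (∀ c ∈ C, R c x) ∧ A.Perm (B' ++ C ++ B'')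

/-- Multiset version of list expansion. -/
def MExpand {X : Type} (R : X → X → Prop) (A B : Multiset X) : Prop :=
  ∃ (x : X) (C M : Multiset X), B = x ::ₘ M ∧ (∀ c ∈ C, R c x) ∧ A = C + M

lemma mexpand_acc_add {X : Type} {R : X → X → Prop} {x : X}
    (hx : ∀ y, R y x → ∀ N, Acc (MExpand R) N → Acc (MExpand R) (y ::ₘ N)) :
    ∀ (C : Multiset X), (∀ c ∈ C, R c x) →
      ∀ M, Acc (MExpand R) M → Acc (MExpand R) (C + M) := by
  intro C
  induction C using Multiset.induction with
  | empty => intro _ M hM; simpa using hM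
  | cons c C ih =>
      intro hC M hM
      have h1 : Acc (MExpand R) (C + M) :=
        ih (fun d hd => hC d (Multiset.mem_cons_of_mem hd)) M hM
      have h2 := hx c (hC c (Multiset.mem_cons_self c C)) _ h1
      simpa [Multiset.cons_add] using h2

lemma mexpand_acc_cons {X : Type} {R : X → X → Prop} {x : X}
    (hx : ∀ y, R y x → ∀ N, Acc (MExpand R) N → Acc (MExpand R) (y ::ₘ N)) :
    ∀ M, Acc (MExpand R) M → Acc (MExpand R) (x ::ₘ M) := by
  intro M hM
  induction hM with
  | intro M hM ih =>
    constructor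
    intro N hN
    obtain ⟨z, C, M', hB, hC, hA⟩ := hN
    rcases Multiset.cons_eq_cons.mp hB with ⟨rfl, rfl⟩ | ⟨hne, cs, h1, h2⟩
    · subst hA
      exact mexpand_acc_add hx C hC M (Acc.intro M hM)
    · subst h1; subst h2
      have hsmall : MExpand R (C + cs) (z ::ₘ cs) := ⟨z, C, cs, rfl, hC, rfl⟩
      have := ih _ hsmall
      have hNeq : N = x ::ₘ (C + cs) := by
        rw [hA]
        simp [Multiset.cons_add, Multiset.add_cons]
      rw [hNeq]
      exact this

lemma mexpand_wf {X : Type} {R : X → X → Prop} (hR : WellFounded R) :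
    WellFounded (MExpand R) := by
  constructor
  intro M
  induction M using Multiset.induction with
  | empty =>
      constructor
      intro N hN
      obtain ⟨z, C, M', hB, _, _⟩ := hN
      exact absurd hB.symm (Multiset.cons_ne_zero)
  | cons x M ih =>
      have hx : ∀ (x : X), ∀ N, Acc (MExpand R) N → Acc (MExpand R) (x ::ₘ N) := by
        intro x
        induction x using hR.induction with
        | _ x ihx =>
          intro N hN
          exact mexpand_acc_cons (fun y hy => ihx y hy) N hN
      exact hx x M ih

lemma listExpand_to_mexpand {X : Type} {R : X → X → Prop} {A B : List X}
    (h : ListExpand R A B) : MExpand R (↑A : Multiset X) (↑B : Multiset X) := by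
  obtain ⟨B', B'', C, x, hB, hC, hA⟩ := h
  refine ⟨x, (↑C : Multiset X), (↑B' : Multiset X) + (↑B'' : Multiset X), ?_, ?_, ?_⟩
  · subst hB
    simp [Multiset.cons_add, Multiset.add_cons]
  · intro c hc
    exact hC c (by simpa using hc)
  · have : (↑A : Multiset X) = ((B' ++ C ++ B'' : List X) : Multiset X) :=
      Multiset.coe_eq_coe.mpr hA
    rw [this]
    show ((B' ++ C ++ B'' : List X) : Multiset X) = _
    simp only [← Multiset.coe_add]
    refine Multiset.coe_eq_coe.mpr ?_
    rw [List.append_assoc]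
    exact List.perm_append_comm_assoc B' C B''

/-- If `R` is well-founded, the transitive closure of list expansion is well-founded. -/
theorem stmt9 {X : Type} (R : X → X → Prop) (hR : WellFounded R) :
    WellFounded (Relation.TransGen (ListExpand R)) := by
  have wfM : WellFounded (Relation.TransGen (MExpand R)) := (mexpand_wf hR).transGen
  have wfInv : WellFounded
      (InvImage (Relation.TransGen (MExpand R)) (fun L : List X => (↑L : Multiset X))) :=
    InvImage.wf _ wfM
  apply Subrelation.wf (r := InvImage (Relation.TransGen (MExpand R))
      (fun L : List X => (↑L : Multiset X))) ?_ wfInv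
  intro A B h
  exact Relation.TransGen.lift _ (fun a b hab => listExpand_to_mexpand hab) A B h
end

section
/- If A ≺'_R B (list-expansion without permutation: B = B' ++ x :: B'', A = B' ++ C ++ B'', all elements of C are R-below x) and both A-parts are accessible, then accessibility of ≺'_R on A and on B implies accessibility on A ++ B; moreover ≺'_R is accessible on every singleton [x] when R is well-founded, and hence ≺'_R is well-founded on all lists. -/
/-- List expansion without permutation. -/
def ListExpand' {X : Type} (R : X → X → Prop) (A B : List X) : Prop :=
  ∃ (B' B'' C : List X) (x : X),
    B = B' ++ x :: B'' ∧ A = B' ++ C ++ B'' ∧ ∀ c ∈ C, R c x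

private lemma le'_acc_nil {X : Type} (R : X → X → Prop) : Acc (ListExpand' R) [] := by
  constructor
  rintro L ⟨B', B'', C, x, hB, hA, hC⟩
  exact absurd hB (by simp)

private lemma le'_acc_append {X : Type} (R : X → X → Prop) :
    ∀ A : List X, Acc (ListExpand' R) A → ∀ B : List X, Acc (ListExpand' R) B →
      Acc (ListExpand' R) (A ++ B) := by
  intro A hA
  induction hA with
  | intro A hA' ihA =>
    intro B hB
    induction hB with
    | intro B hB' ihB =>
      constructor
      rintro L ⟨B', B'', C, x, hEq, hL, hC⟩
      rcases List.append_eq_append_iff.mp hEq.symm with ⟨a, ha1, ha2⟩ | ⟨c, hc1, hc2⟩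
      · cases a with
        | nil =>
          simp at ha1 ha2
          subst ha1
          have hsm : ListExpand' R (C ++ B'') B := ⟨[], B'', C, x, by simp [ha2], by simp, hC⟩
          have : L = A ++ (C ++ B'') := by simp [hL]
          rw [this]
          exact ihB _ hsm
        | cons y t =>
          simp only [List.cons_append] at ha2
          obtain ⟨hy, hB''⟩ := List.cons_eq_cons.mp ha2
          subst hy
          have hsm : ListExpand' R (B' ++ C ++ t) A :=
            ⟨B', t, C, x, ha1, by simp, hC⟩
          have : L = (B' ++ C ++ t) ++ B := by simp [hL, hB'']
          rw [this]
          exact ihA _ hsm B (Acc.intro B hB')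
      · have hsm : ListExpand' R (c ++ C ++ B'') B := ⟨c, B'', C, x, hc2, rfl, hC⟩
        have : L = A ++ (c ++ C ++ B'') := by simp [hL, hc1]
        rw [this]
        exact ihB _ hsm

private lemma le'_acc_singleton {X : Type} {R : X → X → Prop} (hR : WellFounded R) :
    ∀ x : X, Acc (ListExpand' R) [x] := by
  intro x
  induction x using hR.induction with
  | _ x ih =>
    constructor
    rintro L ⟨B', B'', C, y, hEq, hL, hC⟩
    obtain ⟨hB', hy, hB''⟩ : B' = [] ∧ y = x ∧ B'' = [] := by
      cases B' with
      | nil => simp at hEq; exact ⟨rfl, hEq.1.symm, hEq.2⟩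
      | cons a t => simp at hEq
    subst hB' hy hB''
    simp at hL
    subst hL
    clear hEq
    induction L with
    | nil => exact le'_acc_nil R
    | cons c cs ihc =>
      have h1 : Acc (ListExpand' R) [c] := ih c (hC c (by simp))
      have h2 : Acc (ListExpand' R) cs := ihc (fun d hd => hC d (by simp [hd]))
      simpa using le'_acc_append R [c] h1 cs h2

/-- For well-founded `R`: accessibility of `≺'_R` is closed under append,
holds on singletons, and hence `≺'_R` is well-founded on all lists. -/
theorem stmt10 {X : Type} (R : X → X → Prop) (hR : WellFounded R) :
    (∀ A B : List X, Acc (ListExpand' R) A → Acc (ListExpand' R) B →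
        Acc (ListExpand' R) (A ++ B)) ∧
    (∀ x : X, Acc (ListExpand' R) [x]) ∧
    WellFounded (ListExpand' R) := by
  refine ⟨fun A B hA hB => le'_acc_append R A hA B hB, le'_acc_singleton hR, ?_⟩
  constructor
  intro L
  induction L with
  | nil => exact le'_acc_nil R
  | cons a l ih =>
    simpa using le'_acc_append R [a] (le'_acc_singleton hR a) l ih
end
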